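/- For all integers k and l: Q₁(k,l) ≥ 2/(3√3) and Q₁(k,l) ≥ (2/(3√3))·(k² + l²). -/

import Mathlib

/-- The quadratic form `Q₁(k,l) = (2/√3)(k+(l+1)/2)² + (√3/2)(l+1/3)²`. -/
noncomputable def Q1 (k l : ℤ) : ℝ :=
  2 / Real.sqrt 3 * ((k : ℝ) + ((l : ℝ) + 1) / 2) ^ 2 +
    Real.sqrt 3 / 2 * ((l : ℝ) + 1 / 3) ^ 2

/-- Growth of `Q₁`: `Q₁(k,l) ≥ 2/(3√3)` and `Q₁(k,l) ≥ (2/(3√3))(k²+l²)`. -/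
theorem Q1_growth (k l : ℤ) :
    2 / (3 * Real.sqrt 3) ≤ Q1 k l ∧
    2 / (3 * Real.sqrt 3) * ((k : ℝ) ^ 2 + (l : ℝ) ^ 2) ≤ Q1 k l := by
  set s := Real.sqrt 3 with hs
  have hs0 : (0:ℝ) < s := Real.sqrt_pos.mpr (by norm_num)
  have hs3 : s * s = 3 := Real.mul_self_sqrt (by norm_num)
  have hne : s ≠ 0 := ne_of_gt hs0
  set A := (k:ℝ)
  set B := (l:ℝ)
  -- integer facts
  have hl1 : (0:ℤ) ≤ l * (3*l + 2) := by
    rcases le_or_gt 0 l with h | h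
    · nlinarith
    · have : l ≤ -1 := by omega
      nlinarith
  have hl2 : (0:ℤ) ≤ l * (7*l + 6) := by
    rcases le_or_gt 0 l with h | h
    · nlinarith
    · have : l ≤ -1 := by omega
      nlinarith
  have hm4 : (-1:ℤ) ≤ 4 * (k^2 + k*l + l^2 + k + l) := by
    nlinarith [sq_nonneg (2*k + l + 1)]
  have hm : (-1:ℤ) < k^2 + k*l + l^2 + k + l := by linarith
  have hm0 : (0:ℤ) ≤ k^2 + k*l + l^2 + k + l := by
    have := Int.lt_iff_add_one_le.mp hm; linarith
  have hg8 : (-1:ℤ) ≤ 8 * (2*k^2 + 3*k*l + 2*l^2 + 3*k + 3*l + 1) := by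
    nlinarith [sq_nonneg (4*k + 3*l + 3)]
  have hg : (-1:ℤ) < 2*k^2 + 3*k*l + 2*l^2 + 3*k + 3*l + 1 := by linarith
  have hg0 : (0:ℤ) ≤ 2*k^2 + 3*k*l + 2*l^2 + 3*k + 3*l + 1 := by
    have := Int.lt_iff_add_one_le.mp hg; linarith
  -- cast to ℝ
  have hmr : (0:ℝ) ≤ A^2 + A*B + B^2 + A + B := by
    show (0:ℝ) ≤ (k:ℝ)^2 + (k:ℝ)*(l:ℝ) + (l:ℝ)^2 + (k:ℝ) + (l:ℝ)
    exact_mod_cast hm0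
  have hgr : (0:ℝ) ≤ 2*A^2 + 3*A*B + 2*B^2 + 3*A + 3*B + 1 := by
    show (0:ℝ) ≤ 2*(k:ℝ)^2 + 3*(k:ℝ)*(l:ℝ) + 2*(l:ℝ)^2 + 3*(k:ℝ) + 3*(l:ℝ) + 1
    exact_mod_cast hg0
  -- key identity
  have key : s * Q1 k l = 2*(A^2 + A*B + B^2 + A + B) + 2/3 := by
    unfold Q1
    field_simp
    linear_combination ((1 + 6*(l:ℝ) + 9*(l:ℝ)^2) * s) * hs3
  constructor
  · rw [div_le_iff₀ (by positivity)]
    nlinarith [key, hmr]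
  · rw [div_mul_eq_mul_div, div_le_iff₀ (by positivity : (0:ℝ) < 3*s)]
    nlinarith [key, hgr]
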